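/- arXiv:1309.2438 — 6 statements merged into one kernel-verified Lean document; each statement's English description precedes it below -/
import Mathlib

section
/- With V = W ⊕ U and π : U → W* linear, and α_π(w₁+u₁, w₂+u₂) = ⟨π(u₁), w₂⟩ − ⟨π(u₂), w₁⟩, the subspace W is a maximal isotropic subspace with respect to α_π if and only if π is injective. -/
/-- With `V = W ⊕ U` and `π : U → W*` linear, `W` is a maximal isotropic
subspace with respect to `α_π` if and only if `π` is injective. -/
theorem maximal_isotropic_iff_injective
    {F V : Type*} [Field F] [AddCommGroup V] [Module F V] [FiniteDimensional F V]
    (W U : Submodule F V) (h : IsCompl W U) (π : U →ₗ[F] (W →ₗ[F] F)) :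
    let projW := W.linearProjOfIsCompl U h
    let projU := U.linearProjOfIsCompl W h.symm
    let α : V → V → F := fun v₁ v₂ => π (projU v₁) (projW v₂) - π (projU v₂) (projW v₁)
    let Isotropic : Submodule F V → Prop := fun W' => ∀ x ∈ W', ∀ y ∈ W', α x y = 0
    (Isotropic W ∧ ∀ W' : Submodule F V, Isotropic W' → W ≤ W' → W' = W) ↔
      Function.Injective π := by
  intro projW projU α Isotropic
  have projU_W : ∀ w ∈ W, projU w = 0 := fun w hw =>
    Submodule.projectionOnto_apply_of_mem_right h.symm hw
  have projU_U : ∀ u : U, projU (u : V) = u := fun u =>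
    Submodule.linearProjOfIsCompl_apply_left h.symm u
  have projW_W : ∀ w : W, projW (w : V) = w := fun w =>
    Submodule.linearProjOfIsCompl_apply_left h w
  constructor
  · rintro ⟨_, hMax⟩
    rw [injective_iff_map_eq_zero]
    intro u hu
    set W' := W ⊔ Submodule.span F {(u : V)} with hW'
    have key : ∀ x ∈ W', π (projU x) = 0 := by
      intro x hx
      rcases Submodule.mem_sup.mp hx with ⟨w, hw, s, hs, rfl⟩
      rcases Submodule.mem_span_singleton.mp hs with ⟨c, rfl⟩
      rw [map_add, map_smul, projU_W w hw, projU_U u, map_add, map_smul, hu,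
        map_zero, smul_zero, add_zero]
    have hiso : Isotropic W' := by
      intro x hx y hy
      simp only [α, key x hx, key y hy, LinearMap.zero_apply, sub_zero]
    have := hMax W' hiso le_sup_left
    have huW : (u : V) ∈ W := this ▸ le_sup_right (a := W) (Submodule.mem_span_singleton_self _)
    have : (u : V) ∈ W ⊓ U := ⟨huW, u.2⟩
    rw [h.inf_eq_bot] at this
    exact Subtype.ext this
  · intro hinj
    refine ⟨?_, ?_⟩
    · intro x hx y hy
      simp only [α, projU_W x hx, projU_W y hy, map_zero, LinearMap.zero_apply,
        sub_zero]
    · intro W' hiso hle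
      refine le_antisymm ?_ hle
      intro x hx
      have hu0 : π (projU x) = 0 := by
        apply LinearMap.ext
        intro w
        have := hiso x hx (w : V) (hle w.2)
        simp only [α, projU_W (w : V) w.2, map_zero, LinearMap.zero_apply,
          sub_zero, projW_W w] at this
        simpa using this
      have : projU x = 0 := hinj (by simpa using hu0)
      have hx' : ((projW x : V) + (projU x : V)) = x :=
        Submodule.projection_add_projection_eq_self h x
      rw [this] at hx'
      simp only [Submodule.coe_zero, add_zero] at hx'
      exact hx' ▸ (projW x).2
end

section
/- Let G be a finite group, M a trivial G-module, c ∈ Z²(G,M), and α_c(g,h) = c(h,g) − c(hgh⁻¹, h). Then for every g ∈ G, the map h ↦ α_c(g,h) restricted to the centralizer C_G(g) is a group homomorphism from C_G(g) to M. -/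
/-- For a 2-cocycle `c ∈ Z²(G,M)` and `α_c(g,h) = c(h,g) − c(hgh⁻¹,h)`,
the map `h ↦ α_c(g,h)` restricted to the centralizer `C_G(g)` is a group
homomorphism to `M`. -/
theorem associated_form_hom_on_centralizer
    {G M : Type*} [Group G] [Fintype G] [AddCommGroup M]
    (c : G → G → M)
    (hc : ∀ g h k : G, c g h + c (g * h) k = c h k + c g (h * k)) :
    let α : G → G → M := fun g h => c h g - c (h * g * h⁻¹) h
    ∀ g h₁ h₂ : G, g * h₁ = h₁ * g → g * h₂ = h₂ * g →
      α g (h₁ * h₂) = α g h₁ + α g h₂ := by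
  intro α g h₁ h₂ hg1 hg2
  have k1 : h₁ * g * h₁⁻¹ = g := by rw [← hg1]; group
  have k2 : h₂ * g * h₂⁻¹ = g := by rw [← hg2]; group
  have k3 : h₁ * h₂ * g * (h₁ * h₂)⁻¹ = g := by
    rw [mul_assoc h₁ h₂ g, ← hg2, ← mul_assoc, ← hg1]; group
  show c (h₁ * h₂) g - c (h₁ * h₂ * g * (h₁ * h₂)⁻¹) (h₁ * h₂)
      = (c h₁ g - c (h₁ * g * h₁⁻¹) h₁) + (c h₂ g - c (h₂ * g * h₂⁻¹) h₂)
  rw [k1, k2, k3]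
  have e1 := hc g h₁ h₂
  have e2 := hc h₁ h₂ g
  have e3 := hc h₁ g h₂
  rw [hg2] at e3
  rw [← hg1] at e3
  -- e1: c g h₁ + c (g*h₁) h₂ = c h₁ h₂ + c g (h₁*h₂)
  -- e2: c h₁ h₂ + c (h₁*h₂) g = c h₂ g + c h₁ (h₂*g)
  have A : c (h₁ * h₂) g = c h₂ g + c h₁ (h₂ * g) - c h₁ h₂ := by
    rw [← e2]; abel
  have B : c g (h₁ * h₂) = c g h₁ + c (g * h₁) h₂ - c h₁ h₂ :=
    eq_sub_of_add_eq ((add_comm _ _).trans e1.symm)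
  have C : c h₁ (h₂ * g) = c h₁ g + c (g * h₁) h₂ - c g h₂ :=
    eq_sub_of_add_eq ((add_comm _ _).trans e3.symm)
  rw [A, B, C]; abel
end

section
/- Let G = A ⋊ Q be a semidirect product of finite groups with A abelian, and let π ∈ Z¹(Q, Â) be a 1-cocycle, where Â = Hom(A, ℂ*) carries the Q-action ⟨q(χ), a⟩ = ⟨χ, q⁻¹(a)⟩. Define c_π : G × G → ℂ* by c_π(a₁q₁, a₂q₂) = ⟨π(q₁⁻¹), a₂⟩. Then c_π is a 2-cocycle on G with values in the trivial G-module ℂ*. -/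
/-- Let `G = A ⋊ Q` with `A` abelian, and let `π ∈ Z¹(Q, Â)` where
`Â = Hom(A, ℂ*)` with the action `⟨q(χ), a⟩ = ⟨χ, q⁻¹(a)⟩`. Then
`c_π(a₁q₁, a₂q₂) = ⟨π(q₁⁻¹), a₂⟩` is a 2-cocycle on `G` with values in the trivial
`G`-module `ℂ*`. -/
theorem eg_cocycle
    {A Q : Type*} [CommGroup A] [Group Q] [Fintype A] [Fintype Q]
    (φ : Q →* MulAut A) (π : Q → (A →* ℂˣ))
    (hπ : ∀ q₁ q₂ : Q, ∀ a : A, π (q₁ * q₂) a = π q₁ a * π q₂ ((φ q₁)⁻¹ a)) :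
    let c : SemidirectProduct A Q φ → SemidirectProduct A Q φ → ℂˣ :=
      fun g₁ g₂ => π g₁.right⁻¹ g₂.left
    ∀ g h k : SemidirectProduct A Q φ,
      c g h * c (g * h) k = c h k * c g (h * k) := by
  intro c g h k
  show π g.right⁻¹ h.left * π (g.right * h.right)⁻¹ k.left
      = π h.right⁻¹ k.left * π g.right⁻¹ (h.left * φ h.right k.left)
  rw [mul_inv_rev, hπ h.right⁻¹ g.right⁻¹ k.left, map_mul]
  have : (φ h.right⁻¹)⁻¹ = φ h.right := by
    rw [map_inv, inv_inv]
  rw [this]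
  rw [mul_left_comm]
end

section
/- Let [c] ∈ H²(G, ℂ*) be a non-degenerate class on a finite group G, and let A ◁ G be a normal subgroup with res^G_A [c] = 0. Then A is abelian. -/
open Finset

namespace Iso12

open scoped Classical

variable {G : Type*} [Group G] [Fintype G]

/-- twisted convolution -/
noncomputable def tm (C : G → G → ℂ) (z w : G → ℂ) : G → ℂ :=
  fun x => ∑ g : G, z g * w (g⁻¹ * x) * C g (g⁻¹ * x)

noncomputable def δ (g : G) : G → ℂ := fun x => if x = g then 1 else 0

variable (C : G → G → ℂ)

lemma tm_smul_left (s : ℂ) (z w : G → ℂ) : tm C (s • z) w = s • tm C z w := by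
  funext x
  simp only [tm, Pi.smul_apply, smul_eq_mul, Finset.mul_sum]
  exact Finset.sum_congr rfl fun g _ => by ring

lemma tm_smul_right (s : ℂ) (z w : G → ℂ) : tm C z (s • w) = s • tm C z w := by
  funext x
  simp only [tm, Pi.smul_apply, smul_eq_mul, Finset.mul_sum]
  exact Finset.sum_congr rfl fun g _ => by ring

lemma tm_sum_left {ι : Type*} (s : Finset ι) (F : ι → G → ℂ) (w : G → ℂ) :
    tm C (∑ i ∈ s, F i) w = ∑ i ∈ s, tm C (F i) w := by
  funext x
  simp only [tm, Finset.sum_apply, Finset.sum_mul]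
  rw [Finset.sum_comm]

lemma tm_sum_right {ι : Type*} (s : Finset ι) (F : ι → G → ℂ) (w : G → ℂ) :
    tm C w (∑ i ∈ s, F i) = ∑ i ∈ s, tm C w (F i) := by
  funext x
  simp only [tm, Finset.sum_apply, Finset.mul_sum, Finset.sum_mul]
  rw [Finset.sum_comm]

lemma tm_δ_left_apply (g : G) (w : G → ℂ) (x : G) :
    tm C (δ g) w x = w (g⁻¹ * x) * C g (g⁻¹ * x) := by
  simp only [tm, δ]
  rw [Finset.sum_eq_single g]
  · simp
  · intro y _ hy; simp [hy]
  · simp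

lemma tm_δ_right_apply (g : G) (w : G → ℂ) (x : G) :
    tm C w (δ g) x = w (x * g⁻¹) * C (x * g⁻¹) g := by
  simp only [tm, δ]
  rw [Finset.sum_eq_single (x * g⁻¹)]
  · simp
  · intro y _ hy
    have : y⁻¹ * x ≠ g := by
      intro h; apply hy; rw [← h]; group
    simp [this]
  · simp

lemma tm_δδ (g h : G) : tm C (δ g) (δ h) = C g h • δ (g * h) := by
  funext x
  rw [tm_δ_left_apply]
  simp only [δ, Pi.smul_apply, smul_eq_mul]
  by_cases hx : x = g * h
  · subst hx; simp
  · have : g⁻¹ * x ≠ h := by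
      intro h'; apply hx; rw [← h']; group
    simp [this, hx]

lemma tm_assoc (hC : ∀ g h k : G, C g h * C (g * h) k = C h k * C g (h * k))
    (z w v : G → ℂ) : tm C (tm C z w) v = tm C z (tm C w v) := by
  funext x
  simp only [tm, Finset.sum_mul, Finset.mul_sum]
  rw [Finset.sum_comm]
  refine Finset.sum_congr rfl fun u _ => ?_
  rw [← Equiv.sum_comp (Equiv.mulLeft u)
    (fun y => z u * w (u⁻¹ * y) * C u (u⁻¹ * y) * v (y⁻¹ * x) * C y (y⁻¹ * x))]
  refine Finset.sum_congr rfl fun t _ => ?_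
  simp only [Equiv.coe_mulLeft, inv_mul_cancel_left, mul_inv_rev]
  have h := hC u t (t⁻¹ * (u⁻¹ * x))
  have h1 : t * (t⁻¹ * (u⁻¹ * x)) = u⁻¹ * x := by group
  rw [h1] at h
  have h2 : t⁻¹ * u⁻¹ * x = t⁻¹ * (u⁻¹ * x) := by group
  rw [h2]
  linear_combination (z u * w t * v (t⁻¹ * (u⁻¹ * x))) * h

section WithCocycle

variable (hC : ∀ g h k : G, C g h * C (g * h) k = C h k * C g (h * k))
variable (hCne : ∀ g h : G, C g h ≠ 0)

include hC hCne

lemma C_one_left (g : G) : C 1 g = C 1 1 := by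
  have h := hC 1 1 g
  simp only [one_mul] at h
  exact (mul_right_cancel₀ (hCne 1 g) h).symm

lemma C_one_right (g : G) : C g 1 = C 1 1 := by
  have h := hC g 1 1
  simp only [mul_one] at h
  exact mul_right_cancel₀ (hCne g 1) h

lemma C_inv_symm (g : G) : C g g⁻¹ = C g⁻¹ g := by
  have h := hC g g⁻¹ g
  rw [mul_inv_cancel, inv_mul_cancel, C_one_left C hC hCne g, C_one_right C hC hCne g] at h
  exact mul_right_cancel₀ (hCne 1 1) h

end WithCocycle

/-- the unit element -/
noncomputable def oneE : G → ℂ := (C 1 1)⁻¹ • δ 1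

/-- inverse of the basis element `δ g` -/
noncomputable def invE (g : G) : G → ℂ := (C g g⁻¹ * C 1 1)⁻¹ • δ g⁻¹

section WithCocycle2

variable (hC : ∀ g h k : G, C g h * C (g * h) k = C h k * C g (h * k))
variable (hCne : ∀ g h : G, C g h ≠ 0)

include hC hCne

lemma tm_one_left (w : G → ℂ) : tm C (oneE C) w = w := by
  unfold oneE
  rw [tm_smul_left]
  funext x
  rw [Pi.smul_apply, tm_δ_left_apply, inv_one, one_mul, C_one_left C hC hCne x, smul_eq_mul]
  field_simp [hCne 1 1]

lemma tm_one_right (w : G → ℂ) : tm C w (oneE C) = w := by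
  unfold oneE
  rw [tm_smul_right]
  funext x
  rw [Pi.smul_apply, tm_δ_right_apply, inv_one, mul_one, C_one_right C hC hCne x, smul_eq_mul]
  field_simp [hCne 1 1]

lemma tm_δ_inv (g : G) : tm C (δ g) (invE C g) = oneE C := by
  unfold invE oneE
  rw [tm_smul_right, tm_δδ, mul_inv_cancel]
  rw [smul_smul, mul_inv, mul_comm (C g g⁻¹)⁻¹ (C 1 1)⁻¹, mul_assoc,
    inv_mul_cancel₀ (hCne g g⁻¹), mul_one]

lemma tm_inv_δ (g : G) : tm C (invE C g) (δ g) = oneE C := by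
  unfold invE oneE
  rw [tm_smul_left, tm_δδ, inv_mul_cancel, ← C_inv_symm C hC hCne]
  rw [smul_smul, mul_inv, mul_comm (C g g⁻¹)⁻¹ (C 1 1)⁻¹, mul_assoc,
    inv_mul_cancel₀ (hCne g g⁻¹), mul_one]

end WithCocycle2

/-- conjugation by the basis unit `δ g` -/
noncomputable def σE (g : G) (w : G → ℂ) : G → ℂ := tm C (δ g) (tm C w (invE C g))

lemma σE_apply (g : G) (w : G → ℂ) (x : G) :
    σE C g w x
      = (C g g⁻¹ * C 1 1)⁻¹ * (w (g⁻¹ * x * g) * C (g⁻¹ * x * g) g⁻¹) * C g (g⁻¹ * x) := by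
  simp only [σE, invE, tm_smul_right, Pi.smul_apply, smul_eq_mul, tm_δ_left_apply,
    tm_δ_right_apply, inv_inv]

lemma σE_smul (g : G) (s : ℂ) (w : G → ℂ) : σE C g (s • w) = s • σE C g w := by
  simp only [σE, tm_smul_left, tm_smul_right]

lemma σE_sum {ι : Type*} (g : G) (s : Finset ι) (F : ι → G → ℂ) :
    σE C g (∑ i ∈ s, F i) = ∑ i ∈ s, σE C g (F i) := by
  simp only [σE, tm_sum_left, tm_sum_right]

lemma σE_zero (g : G) : σE C g 0 = 0 := by
  funext x
  simp [σE_apply]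

lemma σE_δ (g x₀ : G) :
    σE C g (δ x₀)
      = ((C g g⁻¹ * C 1 1)⁻¹ * C x₀ g⁻¹ * C g (x₀ * g⁻¹)) • δ (g * x₀ * g⁻¹) := by
  funext x
  rw [σE_apply]
  simp only [Pi.smul_apply, smul_eq_mul, δ]
  by_cases hx : x = g * x₀ * g⁻¹
  · subst hx
    have h1 : g⁻¹ * (g * x₀ * g⁻¹) * g = x₀ := by group
    have h2 : g⁻¹ * (g * x₀ * g⁻¹) = x₀ * g⁻¹ := by group
    rw [h1, h2]
    simp only [if_pos rfl]
    ring
  · have h1 : g⁻¹ * x * g ≠ x₀ := by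
      intro h; apply hx; rw [← h]; group
    simp [h1, hx]

section WithCocycle3

variable (hC : ∀ g h k : G, C g h * C (g * h) k = C h k * C g (h * k))
variable (hCne : ∀ g h : G, C g h ≠ 0)

include hC hCne

lemma tm_cancel (g : G) (x w : G → ℂ) :
    tm C (tm C x (invE C g)) (tm C (δ g) w) = tm C x w := by
  rw [tm_assoc C hC, ← tm_assoc C hC (invE C g) (δ g) w, tm_inv_δ C hC hCne,
    tm_one_left C hC hCne]

lemma σE_tm (g : G) (x y : G → ℂ) :
    tm C (σE C g x) (σE C g y) = σE C g (tm C x y) := by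
  unfold σE
  rw [tm_assoc C hC, tm_cancel C hC hCne, ← tm_assoc C hC x y (invE C g)]

lemma invE_tm (g h : G) :
    tm C (invE C h) (invE C g) = (C g h)⁻¹ • invE C (g * h) := by
  have h1 : tm C (tm C (invE C h) (invE C g)) (tm C (δ g) (δ h)) = oneE C := by
    rw [tm_assoc C hC, ← tm_assoc C hC (invE C g) (δ g) (δ h), tm_inv_δ C hC hCne,
      tm_one_left C hC hCne, tm_inv_δ C hC hCne]
  have h2 : tm C (tm C (δ g) (δ h)) ((C g h)⁻¹ • invE C (g * h)) = oneE C := by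
    rw [tm_δδ, tm_smul_left, tm_smul_right, smul_smul, mul_inv_cancel₀ (hCne g h),
      one_smul, tm_δ_inv C hC hCne]
  calc tm C (invE C h) (invE C g)
      = tm C (tm C (invE C h) (invE C g)) (oneE C) := (tm_one_right C hC hCne _).symm
    _ = tm C (tm C (invE C h) (invE C g))
          (tm C (tm C (δ g) (δ h)) ((C g h)⁻¹ • invE C (g * h))) := by rw [h2]
    _ = tm C (tm C (tm C (invE C h) (invE C g)) (tm C (δ g) (δ h)))
          ((C g h)⁻¹ • invE C (g * h)) := (tm_assoc C hC _ _ _).symm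
    _ = tm C (oneE C) ((C g h)⁻¹ • invE C (g * h)) := by rw [h1]
    _ = (C g h)⁻¹ • invE C (g * h) := tm_one_left C hC hCne _

lemma σE_comp (g h : G) (x : G → ℂ) : σE C g (σE C h x) = σE C (g * h) x := by
  unfold σE
  rw [tm_assoc C hC (δ h) (tm C x (invE C h)) (invE C g),
    tm_assoc C hC x (invE C h) (invE C g), invE_tm C hC hCne,
    tm_smul_right, tm_smul_right, tm_smul_right, ← tm_assoc C hC (δ g) (δ h), tm_δδ,
    tm_smul_left, smul_smul, inv_mul_cancel₀ (hCne g h), one_smul]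

lemma δ_one_eq : δ (1 : G) = C 1 1 • oneE C := by
  unfold oneE
  rw [smul_smul, mul_inv_cancel₀ (hCne 1 1), one_smul]

lemma σE_one (x : G → ℂ) : σE C 1 x = x := by
  funext pt
  rw [σE_apply]
  simp only [inv_one, one_mul, mul_one]
  rw [C_one_right C hC hCne pt, C_one_left C hC hCne pt,
    mul_inv (C 1 1) (C 1 1)]
  have h0 := hCne 1 1
  field_simp

lemma tm_conj_eq (g : G) (z : G → ℂ) (h : σE C g z = z) :
    tm C (δ g) z = tm C z (δ g) := by
  have h2 := congrArg (fun y => tm C y (δ g)) h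
  simp only [σE] at h2
  rw [tm_assoc C hC, tm_assoc C hC, tm_inv_δ C hC hCne, tm_one_right C hC hCne] at h2
  exact h2

end WithCocycle3

end Iso12

set_option maxHeartbeats 1000000 in
/-- If `[c] ∈ H²(G, ℂ*)` is non-degenerate (for every `x ≠ e` there is
`g ∈ C_G(x)` with `c(x,g) ≠ c(g,x)`) and `A ◁ G` is a normal subgroup on which the
restriction of `[c]` is trivial (i.e. a coboundary), then `A` is abelian. -/
theorem isotropic_normal_subgroup_abelian
    {G : Type*} [Group G] [Fintype G]
    (c : G → G → ℂˣ)
    (hc : ∀ g h k : G, c g h * c (g * h) k = c h k * c g (h * k))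
    (hnd : ∀ x : G, x ≠ 1 → ∃ g : G, x * g = g * x ∧ c x g ≠ c g x)
    (A : Subgroup G) [A.Normal]
    (hres : ∃ f : A → ℂˣ, ∀ a b : A, c (a : G) (b : G) = f a * f b * (f (a * b))⁻¹) :
    ∀ a b : A, a * b = b * a := by
  classical
  obtain ⟨f, hf⟩ := hres
  letI : Fintype A := Fintype.ofFinite A
  intro a b
  set C : G → G → ℂ := fun g h => (c g h : ℂ) with hCdef
  have hC : ∀ g h k : G, C g h * C (g * h) k = C h k * C g (h * k) := by
    intro g h k
    have := congrArg Units.val (hc g h k)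
    simp only [Units.val_mul] at this
    simpa [hCdef] using this
  have hCne : ∀ g h : G, C g h ≠ 0 := fun g h => Units.ne_zero _
  have hfne : ∀ p : A, (f p : ℂ) ≠ 0 := fun p => Units.ne_zero _
  have hfC : ∀ p q : A,
      C (p : G) (q : G) = (f p : ℂ) * (f q : ℂ) * ((f (p * q) : ℂ))⁻¹ := by
    intro p q
    have := congrArg Units.val (hf p q)
    simpa [hCdef, Units.val_mul, Units.val_inv_eq_inv_val] using this
  set v : A → G → ℂ := fun p => ((f p : ℂ))⁻¹ • Iso12.δ (p : G) with hvdef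
  have hv : ∀ p q : A, Iso12.tm C (v p) (v q) = v (p * q) := by
    intro p q
    simp only [hvdef, Iso12.tm_smul_left, Iso12.tm_smul_right, Iso12.tm_δδ, smul_smul]
    rw [show ((p : G) * (q : G)) = ((p * q : A) : G) by norm_cast]
    congr 1
    rw [hfC p q]
    field_simp
  set e : G → ℂ := (Fintype.card A : ℂ)⁻¹ • ∑ p : A, v p with hedef
  have hcard : (Fintype.card A : ℂ) ≠ 0 := Nat.cast_ne_zero.2 Fintype.card_ne_zero
  have hve : ∀ p : A, Iso12.tm C (v p) e = e := by
    intro p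
    rw [hedef, Iso12.tm_smul_right, Iso12.tm_sum_right]
    congr 1
    rw [Finset.sum_congr rfl fun q _ => hv p q]
    exact Fintype.sum_equiv (Equiv.mulLeft p) _ _ (fun q => rfl)
  have hev : ∀ p : A, Iso12.tm C e (v p) = e := by
    intro p
    rw [hedef, Iso12.tm_smul_left, Iso12.tm_sum_left]
    congr 1
    rw [Finset.sum_congr rfl fun q _ => hv q p]
    exact Fintype.sum_equiv (Equiv.mulRight p) _ _ (fun q => rfl)
  have hee : Iso12.tm C e e = e := by
    have h1 : ∑ p : A, Iso12.tm C (v p) e = (Fintype.card A : ℂ) • e := by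
      rw [Finset.sum_congr rfl fun p _ => hve p, Finset.sum_const, Finset.card_univ,
        ← Nat.cast_smul_eq_nsmul ℂ]
    nth_rewrite 1 [hedef]
    rw [Iso12.tm_smul_left, Iso12.tm_sum_left, h1, smul_smul, inv_mul_cancel₀ hcard,
      one_smul]
  have hesupp : ∀ x : G, x ∉ A → e x = 0 := by
    intro x hx
    have hterm : ∀ p : A, v p x = 0 := by
      intro p
      have : x ≠ (p : G) := fun h => hx (h ▸ p.2)
      simp [hvdef, Iso12.δ, this]
    rw [hedef]
    simp only [Pi.smul_apply, Finset.sum_apply, smul_eq_mul]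
    rw [Finset.sum_eq_zero (fun p _ => hterm p), mul_zero]
  have hene : e ≠ 0 := by
    intro h0
    have h1 := congrFun h0 1
    rw [hedef] at h1
    simp only [Pi.smul_apply, Finset.sum_apply, smul_eq_mul, Pi.zero_apply] at h1
    have hsum : ∑ p : A, v p 1 = ((f 1 : ℂ))⁻¹ := by
      rw [Finset.sum_eq_single (1 : A)]
      · simp [hvdef, Iso12.δ]
      · intro q _ hq
        have : (1 : G) ≠ (q : G) := by
          intro h
          exact hq (Subtype.ext h.symm)
        simp [hvdef, Iso12.δ, this]
      · simp
    rw [hsum] at h1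
    exact (mul_ne_zero (inv_ne_zero hcard) (inv_ne_zero (hfne 1))) h1
  set E : G → G → ℂ := fun g => Iso12.σE C g e with hEdef
  have hE1 : E 1 = e := by
    simp only [hEdef]
    exact Iso12.σE_one C hC hCne e
  have hEcomp : ∀ h g : G, Iso12.σE C h (E g) = E (h * g) := by
    intro h g
    simp only [hEdef]
    exact Iso12.σE_comp C hC hCne h g e
  have hEidem : ∀ g : G, Iso12.tm C (E g) (E g) = E g := by
    intro g
    simp only [hEdef]
    rw [Iso12.σE_tm C hC hCne, hee]
  have hEne : ∀ g : G, E g ≠ 0 := by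
    intro g h0
    have h1 := congrArg (Iso12.σE C g⁻¹) h0
    simp only [hEdef] at h1
    rw [Iso12.σE_comp C hC hCne, inv_mul_cancel, Iso12.σE_one C hC hCne,
      Iso12.σE_zero] at h1
    exact hene h1
  have hEsupp : ∀ (g x : G), x ∉ A → E g x = 0 := by
    intro g x hx
    have hxA : g⁻¹ * x * g ∉ A := by
      intro hmem
      apply hx
      have h2 := Subgroup.Normal.conj_mem ‹A.Normal› _ hmem g
      have h3 : g * (g⁻¹ * x * g) * g⁻¹ = x := by group
      rwa [h3] at h2
    simp only [hEdef]
    rw [Iso12.σE_apply, hesupp _ hxA]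
    ring
  have hs : ∀ (g : G) (p : A), ∃ s : ℂ,
      Iso12.tm C (v p) (E g) = s • E g ∧ Iso12.tm C (E g) (v p) = s • E g := by
    intro g p
    have hmem : g⁻¹ * (p : G) * g ∈ A := by
      have h2 := Subgroup.Normal.conj_mem ‹A.Normal› _ p.2 g⁻¹
      rwa [inv_inv] at h2
    set p' : A := ⟨g⁻¹ * (p : G) * g, hmem⟩ with hp'def
    set s₀ : ℂ := (C g⁻¹ (g⁻¹)⁻¹ * C 1 1)⁻¹ * C (p : G) (g⁻¹)⁻¹
      * C g⁻¹ ((p : G) * (g⁻¹)⁻¹) with hs₀def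
    have hσv : Iso12.σE C g⁻¹ (v p) = ((f p : ℂ)⁻¹ * s₀ * (f p' : ℂ)) • v p' := by
      simp only [hvdef]
      rw [Iso12.σE_smul, Iso12.σE_δ]
      rw [show g⁻¹ * (p : G) * (g⁻¹)⁻¹ = ((p' : A) : G) by rw [hp'def]; simp [inv_inv]]
      rw [smul_smul, smul_smul, ← hs₀def]
      congr 1
      field_simp
    have hvp : v p = Iso12.σE C g (((f p : ℂ)⁻¹ * s₀ * (f p' : ℂ)) • v p') := by
      rw [← hσv, Iso12.σE_comp C hC hCne, mul_inv_cancel, Iso12.σE_one C hC hCne]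
    refine ⟨(f p : ℂ)⁻¹ * s₀ * (f p' : ℂ), ?_, ?_⟩
    · calc Iso12.tm C (v p) (E g)
          = Iso12.tm C (Iso12.σE C g (((f p : ℂ)⁻¹ * s₀ * (f p' : ℂ)) • v p'))
            (Iso12.σE C g e) := by rw [← hvp]
        _ = Iso12.σE C g (Iso12.tm C (((f p : ℂ)⁻¹ * s₀ * (f p' : ℂ)) • v p') e) :=
            Iso12.σE_tm C hC hCne _ _ _
        _ = Iso12.σE C g (((f p : ℂ)⁻¹ * s₀ * (f p' : ℂ)) • e) := by
            rw [Iso12.tm_smul_left, hve p']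
        _ = ((f p : ℂ)⁻¹ * s₀ * (f p' : ℂ)) • E g := by
            rw [Iso12.σE_smul]
    · calc Iso12.tm C (E g) (v p)
          = Iso12.tm C (Iso12.σE C g e)
            (Iso12.σE C g (((f p : ℂ)⁻¹ * s₀ * (f p' : ℂ)) • v p')) := by
            rw [← hvp]
        _ = Iso12.σE C g (Iso12.tm C e (((f p : ℂ)⁻¹ * s₀ * (f p' : ℂ)) • v p')) :=
            Iso12.σE_tm C hC hCne _ _ _
        _ = Iso12.σE C g (((f p : ℂ)⁻¹ * s₀ * (f p' : ℂ)) • e) := by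
            rw [Iso12.tm_smul_right, hev p']
        _ = ((f p : ℂ)⁻¹ * s₀ * (f p' : ℂ)) • E g := by
            rw [Iso12.σE_smul]
  choose s hs1 hs2 using hs
  have hexp : ∀ g : G, E g = ∑ p : A, ((E g (p : G)) * (f p : ℂ)) • v p := by
    intro g
    funext x
    have hterm : ∀ p : A,
        (((E g (p : G)) * (f p : ℂ)) • v p) x = E g (p : G) * Iso12.δ (p : G) x := by
      intro p
      simp only [hvdef, Pi.smul_apply, smul_eq_mul]
      field_simp
    rw [Finset.sum_apply, Finset.sum_congr rfl fun p _ => hterm p]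
    by_cases hx : x ∈ A
    · rw [Finset.sum_eq_single (⟨x, hx⟩ : A)]
      · simp [Iso12.δ]
      · intro q _ hq
        have : x ≠ (q : G) := by
          intro h
          exact hq (Subtype.ext h.symm)
        simp [Iso12.δ, this]
      · simp
    · rw [hEsupp g x hx, Finset.sum_eq_zero]
      intro q _
      have : x ≠ (q : G) := fun h => hx (h ▸ q.2)
      simp [Iso12.δ, this]
  have horth : ∀ g h : G, E g ≠ E h → Iso12.tm C (E g) (E h) = 0 := by
    intro g h hne
    set Λ : ℂ := ∑ p : A, (E g (p : G) * (f p : ℂ)) * s h p with hΛdef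
    set Λ' : ℂ := ∑ p : A, (E h (p : G) * (f p : ℂ)) * s g p with hΛ'def
    have hgh : Iso12.tm C (E g) (E h) = Λ • E h := by
      conv_lhs => rw [hexp g]
      rw [Iso12.tm_sum_left,
        Finset.sum_congr rfl fun p _ => by
          rw [Iso12.tm_smul_left, hs1 h p, smul_smul],
        ← Finset.sum_smul]
    have hhg : Iso12.tm C (E h) (E g) = Λ • E h := by
      conv_lhs => rw [hexp g]
      rw [Iso12.tm_sum_right,
        Finset.sum_congr rfl fun p _ => by
          rw [Iso12.tm_smul_right, hs2 h p, smul_smul],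
        ← Finset.sum_smul]
    have hhg' : Iso12.tm C (E h) (E g) = Λ' • E g := by
      conv_lhs => rw [hexp h]
      rw [Iso12.tm_sum_left,
        Finset.sum_congr rfl fun p _ => by
          rw [Iso12.tm_smul_left, hs1 g p, smul_smul],
        ← Finset.sum_smul]
    by_cases hΛ : Λ = 0
    · rw [hgh, hΛ, zero_smul]
    · exfalso
      have key : Λ • E h = Λ' • E g := by rw [← hhg, hhg']
      have hΛ' : Λ' ≠ 0 := by
        intro h0
        rw [h0, zero_smul] at key
        rcases smul_eq_zero.1 key with h' | h'
        · exact hΛ h'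
        · exact hEne h h'
      have hEg : E g = (Λ'⁻¹ * Λ) • E h := by
        calc E g = Λ'⁻¹ • (Λ' • E g) := by
              rw [smul_smul, inv_mul_cancel₀ hΛ', one_smul]
          _ = Λ'⁻¹ • (Λ • E h) := by rw [← key]
          _ = (Λ'⁻¹ * Λ) • E h := by rw [smul_smul]
      set μ : ℂ := Λ'⁻¹ * Λ with hμdef
      have hμ : μ ≠ 0 := mul_ne_zero (inv_ne_zero hΛ') hΛ
      have hidem := hEidem g
      rw [hEg, Iso12.tm_smul_left, Iso12.tm_smul_right, hEidem h, smul_smul] at hidem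
      have hzero : (μ * μ - μ) • E h = 0 := by rw [sub_smul, hidem, sub_self]
      have hμμ : μ * μ - μ = 0 := by
        rcases smul_eq_zero.1 hzero with h' | h'
        · exact h'
        · exact absurd h' (hEne h)
      have hμ1 : μ = 1 := by
        have h2 : μ * μ = 1 * μ := by rw [one_mul]; linear_combination hμμ
        exact mul_right_cancel₀ hμ h2
      apply hne
      rw [hEg, hμ1, one_smul]
  set S : Finset (G → ℂ) := Finset.image E Finset.univ with hSdef
  set z : G → ℂ := ∑ w ∈ S, w with hzdef
  have hσinj : ∀ h : G, Function.Injective (Iso12.σE C h) := by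
    intro h x y hxy
    have h2 := congrArg (Iso12.σE C h⁻¹) hxy
    rwa [Iso12.σE_comp C hC hCne, inv_mul_cancel, Iso12.σE_one C hC hCne,
      Iso12.σE_comp C hC hCne, inv_mul_cancel, Iso12.σE_one C hC hCne] at h2
  have hσz : ∀ h : G, Iso12.σE C h z = z := by
    intro h
    have himg : Finset.image (Iso12.σE C h) S = S := by
      rw [hSdef, Finset.image_image]
      have hcomp : (Iso12.σE C h) ∘ E = fun g => E (h * g) := funext fun g => hEcomp h g
      rw [hcomp]
      ext w
      simp only [Finset.mem_image, Finset.mem_univ, true_and]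
      constructor
      · rintro ⟨g, rfl⟩
        exact ⟨h * g, rfl⟩
      · rintro ⟨g, rfl⟩
        exact ⟨h⁻¹ * g, by rw [mul_inv_cancel_left]⟩
    have hsum2 : ∑ w ∈ Finset.image (Iso12.σE C h) S, (w : G → ℂ)
        = ∑ w ∈ S, Iso12.σE C h w :=
      Finset.sum_image (fun x _ y _ hxy => hσinj h hxy)
    calc Iso12.σE C h z = ∑ w ∈ S, Iso12.σE C h w := by rw [hzdef, Iso12.σE_sum]
      _ = ∑ w ∈ Finset.image (Iso12.σE C h) S, w := hsum2.symm
      _ = z := by rw [himg]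
  have hz0 : ∀ x : G, x ≠ 1 → z x = 0 := by
    intro x hx
    obtain ⟨g, hcomm, hneq⟩ := hnd x hx
    have hCneq : C x g ≠ C g x := by
      intro h
      simp only [hCdef] at h
      exact hneq (Units.ext h)
    have hcent := Iso12.tm_conj_eq C hC hCne g z (hσz g)
    have h1 := congrFun hcent (g * x)
    rw [Iso12.tm_δ_left_apply, Iso12.tm_δ_right_apply, inv_mul_cancel_left] at h1
    have h2 : g * x * g⁻¹ = x := by rw [← hcomm]; group
    rw [h2] at h1
    by_contra hzx
    exact hCneq (mul_left_cancel₀ hzx h1).symm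
  have hz1 : z = (z 1 * C 1 1) • Iso12.oneE C := by
    funext x
    by_cases hx : x = 1
    · subst hx
      simp only [Iso12.oneE, Iso12.δ, Pi.smul_apply, smul_eq_mul, eq_self_iff_true,
        if_true, mul_one]
      rw [mul_assoc, mul_inv_cancel₀ (hCne 1 1), mul_one]
    · rw [hz0 x hx]
      simp [Iso12.oneE, Iso12.δ, hx]
  have hmemS : e ∈ S := by
    rw [hSdef]
    exact Finset.mem_image.2 ⟨1, Finset.mem_univ 1, hE1⟩
  have hez : Iso12.tm C e z = e := by
    rw [hzdef, Iso12.tm_sum_right]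
    rw [Finset.sum_eq_single_of_mem e hmemS]
    · exact hee
    · intro w hw hwne
      rw [hSdef] at hw
      obtain ⟨g, _, rfl⟩ := Finset.mem_image.1 hw
      have hne : E 1 ≠ E g := by
        rw [hE1]
        exact fun h => hwne h.symm
      rw [← hE1]
      exact horth 1 g hne
  have hzone : z = Iso12.oneE C := by
    have h1 : Iso12.tm C e z = (z 1 * C 1 1) • e := by
      conv_lhs => rw [hz1]
      rw [Iso12.tm_smul_right, Iso12.tm_one_right C hC hCne]
    have h2 : (z 1 * C 1 1) • e = e := by rw [← h1, hez]
    have h3 : z 1 * C 1 1 = 1 := by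
      have h4 : (z 1 * C 1 1 - 1) • e = 0 := by
        rw [sub_smul, h2, one_smul, sub_self]
      rcases smul_eq_zero.1 h4 with h' | h'
      · exact sub_eq_zero.1 h'
      · exact absurd h' hene
    rw [hz1, h3, one_smul]
  have hs_mul : ∀ (g : G) (p q : A), s g (p * q) = s g p * s g q := by
    intro g p q
    have h1 : Iso12.tm C (v (p * q)) (E g) = (s g p * s g q) • E g := by
      rw [← hv p q, Iso12.tm_assoc C hC, hs1 g q, Iso12.tm_smul_right, hs1 g p,
        smul_smul, mul_comm (s g q) (s g p)]
    have h2 := hs1 g (p * q)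
    rw [h1] at h2
    have h3 : (s g p * s g q - s g (p * q)) • E g = 0 := by
      rw [sub_smul, h2, sub_self]
    rcases smul_eq_zero.1 h3 with h' | h'
    · exact (sub_eq_zero.1 h').symm
    · exact absurd h' (hEne g)
  have hvv : v (a * b) = v (b * a) := by
    have hsum : Iso12.tm C (v (a * b)) z = Iso12.tm C (v (b * a)) z := by
      rw [hzdef, Iso12.tm_sum_right, Iso12.tm_sum_right]
      refine Finset.sum_congr rfl fun w hw => ?_
      rw [hSdef] at hw
      obtain ⟨g, _, rfl⟩ := Finset.mem_image.1 hw
      rw [hs1 g (a * b), hs1 g (b * a), hs_mul g a b, hs_mul g b a,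
        mul_comm (s g a) (s g b)]
    rwa [hzone, Iso12.tm_one_right C hC hCne, Iso12.tm_one_right C hC hCne] at hsum
  by_cases hab : ((a * b : A) : G) = ((b * a : A) : G)
  · exact Subtype.ext hab
  · exfalso
    have hL : v (a * b) ((a * b : A) : G) = ((f (a * b) : ℂ))⁻¹ := by
      simp [hvdef, Iso12.δ]
    have hab' : (a : G) * (b : G) ≠ (b : G) * (a : G) := by
      intro h
      exact hab (by push_cast; exact h)
    have hR : v (b * a) ((a * b : A) : G) = 0 := by
      simp [hvdef, Iso12.δ, hab']
    rw [hvv, hR] at hL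
    exact (inv_ne_zero (hfne (a * b))) hL.symm
end

section
/- Let G be a finite p-group of order ≥ p^{2m} and [c] ∈ H²(G, ℂ*) any cohomology class. Then there exists a subgroup H < G of order exactly p^m with res^G_H [c] = 0. -/
set_option linter.unusedSectionVars false
set_option maxHeartbeats 1000000


section helpers
variable {G : Type*} [Group G] (d : G → G → ℂ)
  (hne : ∀ g h, d g h ≠ 0)
  (hd : ∀ g h k : G, d g h * d (g * h) k = d h k * d g (h * k))

include hd hne

private lemma coc_one_right (g : G) : d g 1 = d 1 1 := by
  have h := hd g 1 1
  simp only [mul_one, one_mul] at h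
  exact mul_right_cancel₀ (hne g 1) h

private lemma coc_one_left (g : G) : d 1 g = d 1 1 := by
  have h := hd 1 1 g
  simp only [mul_one, one_mul] at h
  exact (mul_right_cancel₀ (hne 1 g) h).symm

private lemma coc_shift_left (x g h : G) (hxc : x * h = h * x) (hreg : d h x = d x h) :
    d (g * x) h * d g x = d g h * d (g * h) x := by
  have I1 := hd g x h
  have I2 := hd g h x
  rw [hxc] at I1
  linear_combination I1 - I2 - d g (h * x) * hreg

private lemma coc_beta_mul (g u v : G) (hu : ∀ a, u * a = a * u) (hv : ∀ a, v * a = a * v) :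
    d g (u * v) * d u g * d v g = d (u * v) g * d g u * d g v := by
  have I1 := hd g u v
  have I2 := hd u g v
  have I3 := hd u v g
  rw [hu g, ← hv g] at I2
  refine mul_left_cancel₀ (hne u v) ?_
  linear_combination (d g u * d v g) * I2 - (d u g * d v g) * I1 - (d g u * d g v) * I3

private lemma coc_chi_mul (x g h : G) (hx : ∀ a, x * a = a * x) :
    d (g * h) x * d x g * d x h = d x (g * h) * d g x * d h x := by
  have E1 := hd x g h
  have E2 := hd g x h
  have E3 := hd g h x
  rw [hx g] at E1
  rw [hx h] at E2
  refine mul_left_cancel₀ (hne (g * x) h) ?_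
  refine mul_left_cancel₀ (hne g h) ?_
  linear_combination (d (g*h) x * d x h * d g h) * E1 - (d x (g*h) * d h x * d g h) * E2 +
    (d g h * d x (g*h) * d x h) * E3

private lemma coc_beta_pow (x g : G) (hx : ∀ a, x * a = a * x) (n : ℕ) :
    d g (x ^ n) * (d x g) ^ n = d (x ^ n) g * (d g x) ^ n := by
  induction n with
  | zero => simp [coc_one_right d hne hd, coc_one_left d hne hd]
  | succ n ih =>
    have C := coc_beta_mul d hne hd g (x ^ n) x (fun a => (Commute.pow_left (hx a) n : _ )) hx
    rw [← pow_succ x n] at C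
    refine mul_left_cancel₀ (hne (x ^ n) g) ?_
    rw [pow_succ (d x g), pow_succ (d g x)]
    linear_combination (d x g) ^ n * C + (d (x ^ (n+1)) g * d g x) * ih

private lemma coc_tele (x b : G) (n : ℕ) :
    (∏ j ∈ Finset.range n, d (b * x ^ j) x) * d b 1 =
      (∏ j ∈ Finset.range n, d (x ^ j) x) * d b (x ^ n) := by
  induction n with
  | zero => simp [mul_comm]
  | succ n ih =>
    have E := hd b (x ^ n) x
    rw [← pow_succ x n] at E
    rw [Finset.prod_range_succ, Finset.prod_range_succ]
    refine mul_left_cancel₀ (hne b (x ^ n)) ?_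
    linear_combination (d (x^n) x * d b (x^(n+1))) * ih +
      ((∏ j ∈ Finset.range n, d (b * x ^ j) x) * d b 1) * E

end helpers



private theorem pgroup_aux (p : ℕ) [Fact p.Prime] :
    ∀ (m : ℕ) {G : Type u} [Group G] [Fintype G], IsPGroup p G →
      p ^ (2 * m) ≤ Fintype.card G → ∀ (c : G → G → ℂˣ),
      (∀ g h k : G, c g h * c (g * h) k = c h k * c g (h * k)) →
      ∃ H : Subgroup G, Nat.card H = p ^ m ∧
        ∃ f : H → ℂˣ, ∀ a b : H, c (a : G) (b : G) = f a * f b * (f (a * b))⁻¹ := by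
  intro m
  induction m with
  | zero =>
    intro G _ _ _ _ c hc
    refine ⟨⊥, by simp, fun _ => c 1 1, ?_⟩
    rintro ⟨a, ha⟩ ⟨b, hb⟩
    rw [Subgroup.mem_bot] at ha hb
    subst ha; subst hb
    show c (1 : G) 1 = _
    group
  | succ m ih =>
    intro G _ _ hG hm c hc
    have hp : p.Prime := Fact.out
    obtain ⟨d, hd_def⟩ : ∃ d : G → G → ℂ, ∀ g h, d g h = (c g h : ℂ) := ⟨_, fun _ _ => rfl⟩
    have hne : ∀ g h : G, d g h ≠ 0 := fun g h => by rw [hd_def]; exact Units.ne_zero _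
    have hd : ∀ g h k : G, d g h * d (g * h) k = d h k * d g (h * k) := by
      intro g h k
      simp only [hd_def]
      exact_mod_cast congrArg Units.val (hc g h k)
    -- a central element of order p
    haveI : Nontrivial G := by
      rw [← Fintype.one_lt_card_iff_nontrivial]
      calc 1 < p ^ (2*(m+1)) := one_lt_pow₀ hp.one_lt (by omega)
      _ ≤ Fintype.card G := hm
    haveI := hG.center_nontrivial
    obtain ⟨z, hz1⟩ := exists_ne (1 : Subgroup.center G)
    obtain ⟨k, hk⟩ := (hG.to_subgroup (Subgroup.center G)) z
    obtain ⟨j, hjk, hoz⟩ := (Nat.dvd_prime_pow hp).mp (orderOf_dvd_of_pow_eq_one hk)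
    have hj0 : j ≠ 0 := by
      intro h; rw [h, pow_zero, orderOf_eq_one_iff] at hoz; exact hz1 hoz
    set x₀ : Subgroup.center G := z ^ (p ^ (j-1)) with hx₀def
    have hox₀ : orderOf x₀ = p := by
      rw [hx₀def, orderOf_pow, hoz, Nat.gcd_eq_right (pow_dvd_pow p (by omega)),
        Nat.pow_div (by omega) hp.pos, show j - (j-1) = 1 by omega, pow_one]
    set x : G := (x₀ : G) with hxdef
    have hxc : x ∈ Subgroup.center G := x₀.2
    have hox : orderOf x = p := by
      rw [← hox₀]
      exact orderOf_injective (Subgroup.center G).subtype (Subgroup.center G).subtype_injective x₀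
    have hx : ∀ a : G, x * a = a * x := fun a => (Subgroup.mem_center_iff.mp hxc a).symm
    have hxp : x ^ p = 1 := by rw [← hox]; exact pow_orderOf_eq_one x
    -- the homomorphism χ
    have hχmul : ∀ g h : G, (fun g => c g x * (c x g)⁻¹) (g * h) =
        (fun g => c g x * (c x g)⁻¹) g * (fun g => c g x * (c x g)⁻¹) h := by
      intro g h
      have key := coc_chi_mul d hne hd x g h hx
      rw [Units.ext_iff]
      push_cast
      simp only [← hd_def]
      field_simp [hne x (g*h), hne x g, hne x h]
      linear_combination key
    set χ : G →* ℂˣ := MonoidHom.mk' (fun g => c g x * (c x g)⁻¹) hχmul with hχdef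
    have hχp : ∀ g : G, χ g ^ p = 1 := by
      intro g
      have key := coc_beta_pow d hne hd x g hx p
      rw [hxp, coc_one_right d hne hd g, coc_one_left d hne hd g] at key
      have key2 : (d g x) ^ p = (d x g) ^ p := by
        have h11 := hne 1 1
        have e : d 1 1 * (d x g)^p = d 1 1 * (d g x)^p := by linear_combination key
        exact (mul_left_cancel₀ h11 e).symm
      have hχg : χ g = c g x * (c x g)⁻¹ := rfl
      rw [Units.ext_iff, hχg]
      push_cast
      simp only [← hd_def]
      field_simp [hne x g]
      have hI : (d x g)⁻¹ ^ p * d x g ^ p = 1 := by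
        rw [← mul_pow, inv_mul_cancel₀ (hne x g), one_pow]
      linear_combination (d x g)⁻¹ ^ p * key2 + hI
    set K : Subgroup G := χ.ker with hKdef
    have hxK : x ∈ K := by
      show χ x = 1
      show c x x * (c x x)⁻¹ = 1
      group
    have hreg : ∀ g : G, g ∈ K → d g x = d x g := by
      intro g hg
      have h1 : c g x * (c x g)⁻¹ = 1 := hg
      have h2 : c g x = c x g := by
        rw [mul_inv_eq_one] at h1; exact h1
      rw [hd_def, hd_def, h2]
    -- cardinality of K
    haveI : NeZero p := ⟨hp.ne_zero⟩
    have hrange : χ.range ≤ rootsOfUnity p ℂ := by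
      rintro y ⟨g, rfl⟩
      exact (mem_rootsOfUnity p _).mpr (hχp g)
    have h2 : Nat.card χ.range ≤ p := by
      refine le_trans (Subgroup.card_le_of_le hrange) ?_
      rw [Complex.card_rootsOfUnity]
    have h1 : Nat.card (G ⧸ K) ≤ p := by
      rw [Nat.card_congr (QuotientGroup.quotientKerEquivRange χ).toEquiv]
      exact h2
    have hKcard : p ^ (2*m+1) ≤ Nat.card K := by
      have h3 := Subgroup.card_eq_card_quotient_mul_card_subgroup K
      have h4 : p ^ (2*(m+1)) ≤ Nat.card (G ⧸ K) * Nat.card K := by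
        rw [← h3, Nat.card_eq_fintype_card]; exact hm
      have h5 : Nat.card (G ⧸ K) * Nat.card K ≤ p * Nat.card K :=
        Nat.mul_le_mul_right _ h1
      have h6 : p * p ^ (2*m+1) ≤ p * Nat.card K := by
        calc p * p ^ (2*m+1) = p ^ (2*(m+1)) := by ring
        _ ≤ _ := le_trans h4 h5
      exact Nat.le_of_mul_le_mul_left h6 hp.pos
    -- the subgroup N = <x'> of K and quotient Q
    set x' : K := ⟨x, hxK⟩ with hx'def
    have hox' : orderOf x' = p := by
      rw [← hox]
      exact (orderOf_injective K.subtype K.subtype_injective x').symm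
    have hx' : ∀ a : K, x' * a = a * x' := fun a => Subtype.ext (hx (a : G))
    set N : Subgroup K := Subgroup.zpowers x' with hNdef
    haveI hN : N.Normal := by
      constructor
      intro n hn g
      obtain ⟨t, rfl⟩ := Subgroup.mem_zpowers_iff.mp hn
      have hcom : x' ^ t * g = g * x' ^ t := Commute.zpow_left (hx' g) t
      rw [← hcom, mul_inv_cancel_right]
      exact Subgroup.zpow_mem N (Subgroup.mem_zpowers x') t
    haveI : Fintype (K ⧸ N) := Fintype.ofFinite _
    have hQ : IsPGroup p (K ⧸ N) := (hG.to_subgroup K).to_quotient N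
    have hx'p : x' ^ p = 1 := by rw [← hox']; exact pow_orderOf_eq_one x'
    have hKQ : Nat.card K = Nat.card (K ⧸ N) * p := by
      rw [Subgroup.card_eq_card_quotient_mul_card_subgroup N, hNdef, Nat.card_zpowers, hox']
    have hQcard : p ^ (2*m) ≤ Fintype.card (K ⧸ N) := by
      rw [← Nat.card_eq_fintype_card]
      have h7 : p ^ (2*m) * p ≤ Nat.card (K ⧸ N) * p := by
        calc p ^ (2*m) * p = p ^ (2*m+1) := by ring
        _ ≤ Nat.card K := hKcard
        _ = _ := hKQ
      exact Nat.le_of_mul_le_mul_right h7 hp.pos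
    set π : K →* K ⧸ N := QuotientGroup.mk' N with hπdef
    have hσ : ∀ q : K ⧸ N, π (Quotient.out q) = q := fun q => QuotientGroup.out_eq' q
    have hπx' : π x' = 1 := by
      rw [← MonoidHom.mem_ker, hπdef, QuotientGroup.ker_mk']
      exact Subgroup.mem_zpowers x'
    have hπx : ∀ a : K, π (a * x') = π a := by
      intro a; rw [map_mul, hπx', mul_one]
    -- the index function
    have hspec : ∀ a : K, ∃ n : ℕ, n < p ∧ Quotient.out (π a) * x' ^ n = a := by
      intro a
      have hy : (Quotient.out (π a))⁻¹ * a ∈ N := by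
        have hy1 : π ((Quotient.out (π a))⁻¹ * a) = 1 := by
          rw [map_mul, map_inv, hσ]; simp
        rwa [hπdef, QuotientGroup.mk'_apply, QuotientGroup.eq_one_iff] at hy1
      obtain ⟨t, ht⟩ := Subgroup.mem_zpowers_iff.mp hy
      have h0 : (0:ℤ) < (p:ℤ) := by exact_mod_cast hp.pos
      have hnn : 0 ≤ t % (p:ℤ) := Int.emod_nonneg t (ne_of_gt h0)
      have hlt : t % (p:ℤ) < (p:ℤ) := Int.emod_lt_of_pos t h0
      refine ⟨(t % (p:ℤ)).toNat, by omega, ?_⟩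
      have e1 : x' ^ ((t % (p:ℤ)).toNat) = x' ^ t := by
        rw [← zpow_natCast, Int.toNat_of_nonneg hnn, ← hox', zpow_mod_orderOf]
      rw [e1, ht, mul_inv_cancel_left]
    choose iFun hilt hieq using hspec
    have huniq : ∀ (a : K) (n : ℕ), n < p → Quotient.out (π a) * x' ^ n = a → n = iFun a := by
      intro a n hn heq
      have he : x' ^ n = x' ^ (iFun a) :=
        mul_left_cancel (heq.trans (hieq a).symm)
      refine pow_injOn_Iio_orderOf ?_ ?_ he <;> rw [hox']
      · exact hn
      · exact hilt a
    -- the correction cochain μ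
    have hPne : (∏ j ∈ Finset.range p, d ((x' ^ j : K) : G) x) ≠ 0 :=
      Finset.prod_ne_zero_iff.mpr fun j _ => hne _ _
    obtain ⟨κ, hκ⟩ := IsAlgClosed.exists_pow_nat_eq
      ((∏ j ∈ Finset.range p, d ((x' ^ j : K) : G) x))⁻¹ hp.pos
    have hκne : κ ≠ 0 := by
      intro h
      rw [h, zero_pow hp.ne_zero] at hκ
      exact inv_ne_zero hPne hκ.symm
    obtain ⟨μ, hμdef⟩ : ∃ μ : K → ℂ, ∀ a,
        μ a = κ ^ (iFun a) *
          ∏ j ∈ Finset.range (iFun a), d ((Quotient.out (π a) * x' ^ j : K) : G) x :=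
      ⟨_, fun _ => rfl⟩
    have hμne : ∀ a : K, μ a ≠ 0 := by
      intro a
      rw [hμdef]
      exact mul_ne_zero (pow_ne_zero _ hκne) (Finset.prod_ne_zero_iff.mpr fun j _ => hne _ _)
    have hkey : ∀ a : K, μ (a * x') = κ * d (a : G) x * μ a := by
      intro a
      have hb : Quotient.out (π a) * x' ^ (iFun a) = a := hieq a
      by_cases hcase : iFun a + 1 < p
      · have h1 : Quotient.out (π (a * x')) * x' ^ (iFun a + 1) = a * x' := by
          rw [hπx, pow_succ, ← mul_assoc, hb]
        have hi : iFun (a * x') = iFun a + 1 := (huniq (a * x') _ hcase h1).symm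
        rw [hμdef (a*x'), hμdef a, hi, hπx, Finset.prod_range_succ, pow_succ, hb]
        ring
      · have hip : iFun a + 1 = p := by have := hilt a; omega
        have h1 : a * x' = Quotient.out (π a) := by
          conv_lhs => rw [← hb]
          rw [mul_assoc, ← pow_succ, hip, hx'p, mul_one]
        have hi0 : iFun (a * x') = 0 := by
          refine (huniq (a*x') 0 hp.pos ?_).symm
          rw [hπx, pow_zero, mul_one, h1]
        rw [hμdef (a*x'), hμdef a, hi0]
        simp only [pow_zero, Finset.prod_range_zero, mul_one, one_mul]
        have hstep : κ * d (a : G) x *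
            (κ ^ (iFun a) * ∏ j ∈ Finset.range (iFun a),
              d ((Quotient.out (π a) * x' ^ j : K) : G) x) =
            κ ^ (iFun a + 1) * ∏ j ∈ Finset.range (iFun a + 1),
              d ((Quotient.out (π a) * x' ^ j : K) : G) x := by
          rw [Finset.prod_range_succ, pow_succ, hb]
          ring
        rw [hstep, hip]
        have hprod : (∏ j ∈ Finset.range p, d ((Quotient.out (π a) * x' ^ j : K) : G) x) =
            ∏ j ∈ Finset.range p, d ((x' ^ j : K) : G) x := by
          have htel := coc_tele d hne hd x ((Quotient.out (π a) : K) : G) p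
          rw [hxp] at htel
          have := mul_right_cancel₀ (hne _ 1) htel
          have hco : ∀ j : ℕ, ((Quotient.out (π a) * x' ^ j : K) : G) =
              ((Quotient.out (π a) : K) : G) * x ^ j := by
            intro j; push_cast [hx'def]; try rfl
          have hco2 : ∀ j : ℕ, ((x' ^ j : K) : G) = x ^ j := by
            intro j; push_cast [hx'def]; try rfl
          calc (∏ j ∈ Finset.range p, d ((Quotient.out (π a) * x' ^ j : K) : G) x)
              = ∏ j ∈ Finset.range p, d (((Quotient.out (π a) : K) : G) * x ^ j) x := by
                refine Finset.prod_congr rfl fun j _ => by rw [hco j]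
            _ = ∏ j ∈ Finset.range p, d (x ^ j) x := this
            _ = ∏ j ∈ Finset.range p, d ((x' ^ j : K) : G) x := by
                refine Finset.prod_congr rfl fun j _ => by rw [hco2 j]
        rw [hprod, hκ, inv_mul_cancel₀ hPne]
    -- the modified cocycle c' on K
    obtain ⟨c', hc'def⟩ : ∃ c' : K → K → ℂ, ∀ a b : K,
        c' a b = d (a : G) (b : G) * μ a * μ b / μ (a * b) := ⟨_, fun _ _ => rfl⟩
    have hc'ne : ∀ a b : K, c' a b ≠ 0 := by
      intro a b
      rw [hc'def]
      exact div_ne_zero (mul_ne_zero (mul_ne_zero (hne _ _) (hμne a)) (hμne b)) (hμne _)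
    have hcoe_mul : ∀ a b : K, ((a * b : K) : G) = (a : G) * (b : G) := fun _ _ => rfl
    have hcoe_x : ((x' : K) : G) = x := rfl
    have hinv1 : ∀ a b : K, c' (a * x') b = c' a b := by
      intro a b
      have hsl := coc_shift_left d hne hd x (a : G) (b : G) (hx (b : G)) (hreg (b : G) b.2)
      have h2 : (a * x') * b = (a * b) * x' := by rw [mul_assoc, hx' b, ← mul_assoc]
      rw [hc'def, hc'def, h2, hkey, hkey]
      rw [show ((a * x' : K) : G) = (a : G) * x from rfl]
      rw [show ((a * b : K) : G) = (a : G) * (b : G) from rfl]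
      field_simp [hμne, hκne, hne]
      linear_combination hsl
    have hinv2 : ∀ a b : K, c' a (b * x') = c' a b := by
      intro a b
      have hsr := hd (a : G) (b : G) x
      have h2 : a * (b * x') = (a * b) * x' := (mul_assoc a b x').symm
      rw [hc'def, hc'def, h2, hkey, hkey]
      rw [show ((b * x' : K) : G) = (b : G) * x from rfl]
      rw [show ((a * b : K) : G) = (a : G) * (b : G) from rfl]
      field_simp [hμne, hκne, hne]
      linear_combination -hsr
    have hinvn1 : ∀ (n : ℕ) (a b : K), c' (a * x' ^ n) b = c' a b := by
      intro n
      induction n with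
      | zero => intro a b; rw [pow_zero, mul_one]
      | succ n ihn =>
        intro a b
        rw [pow_succ, ← mul_assoc, hinv1, ihn]
    have hinvn2 : ∀ (n : ℕ) (a b : K), c' a (b * x' ^ n) = c' a b := by
      intro n
      induction n with
      | zero => intro a b; rw [pow_zero, mul_one]
      | succ n ihn =>
        intro a b
        rw [pow_succ, ← mul_assoc, hinv2, ihn]
    have hbase : ∀ a b : K, c' a b = c' (Quotient.out (π a)) (Quotient.out (π b)) := by
      intro a b
      conv_lhs => rw [← hieq a, ← hieq b]
      rw [hinvn1, hinvn2]
    have hcongr : ∀ a₁ a₂ b₁ b₂ : K, π a₁ = π a₂ → π b₁ = π b₂ → c' a₁ b₁ = c' a₂ b₂ := by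
      intro a₁ a₂ b₁ b₂ ha hb
      rw [hbase a₁ b₁, hbase a₂ b₂, ha, hb]
    have hc'coc : ∀ a b k : K, c' a b * c' (a * b) k = c' b k * c' a (b * k) := by
      intro a b k
      have hcc := hd (a : G) (b : G) (k : G)
      simp only [hc'def]
      rw [show ((a * b : K) : G) = (a : G) * (b : G) from rfl,
          show ((b * k : K) : G) = (b : G) * (k : G) from rfl,
          show a * (b * k) = a * b * k from (mul_assoc a b k).symm]
      field_simp [hμne, hκne, hne]
      linear_combination hcc
    -- the quotient cocycle
    obtain ⟨cb, hcbdef⟩ : ∃ cb : (K ⧸ N) → (K ⧸ N) → ℂˣ, ∀ q r,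
        (cb q r : ℂ) = c' (Quotient.out q) (Quotient.out r) :=
      ⟨fun q r => Units.mk0 _ (hc'ne _ _), fun _ _ => rfl⟩
    have hcbcoc : ∀ q r s : K ⧸ N, cb q r * cb (q * r) s = cb r s * cb q (r * s) := by
      intro q r s
      have e1 : c' (Quotient.out (q * r)) (Quotient.out s) =
          c' (Quotient.out q * Quotient.out r) (Quotient.out s) :=
        hcongr _ _ _ _ (by rw [map_mul, hσ, hσ, hσ]) rfl
      have e2 : c' (Quotient.out q) (Quotient.out (r * s)) =
          c' (Quotient.out q) (Quotient.out r * Quotient.out s) :=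
        hcongr _ _ _ _ rfl (by rw [map_mul, hσ, hσ, hσ])
      rw [Units.ext_iff]
      push_cast
      rw [hcbdef, hcbdef, hcbdef, hcbdef, e1, e2]
      exact hc'coc _ _ _
    -- apply the induction hypothesis
    obtain ⟨Hb, hHbcard, fb, hfb⟩ := ih hQ hQcard cb hcbcoc
    -- pull back the subgroup
    have hpre : Nat.card (Subgroup.comap π Hb) = p ^ (m + 1) := by
      have e : ((Subgroup.comap π Hb : Set K)) =
          QuotientGroup.mk ⁻¹' (Hb : Set (K ⧸ N)) := rfl
      have : Nat.card (Subgroup.comap π Hb) = Nat.card (↥N × (Hb : Set (K ⧸ N))) :=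
        Nat.card_congr ((Equiv.setCongr e).trans
          (QuotientGroup.preimageMkEquivSubgroupProdSet N (Hb : Set (K ⧸ N))))
      rw [this, Nat.card_prod]
      have hcN : Nat.card N = p := by
        show Nat.card (Subgroup.zpowers x') = p
        rw [Nat.card_zpowers, hox']
      have hcHb : Nat.card (Hb : Set (K ⧸ N)) = p ^ m := by
        rw [← hHbcard]; rfl
      rw [hcN, hcHb, pow_succ, mul_comm]
    refine ⟨(Subgroup.comap π Hb).map K.subtype, ?_, ?_⟩
    · rw [← hpre]
      exact (Nat.card_congr (Subgroup.equivMapOfInjective _ K.subtype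
        K.subtype_injective).toEquiv).symm
    · have HleK : (Subgroup.comap π Hb).map K.subtype ≤ K := Subgroup.map_subtype_le _
      set H : Subgroup G := (Subgroup.comap π Hb).map K.subtype with hHdef
      have hEK : ∀ a : H, (a : G) ∈ K := fun a => HleK a.2
      set E : H → K := fun a => ⟨(a : G), hEK a⟩ with hEdef
      have hEmem : ∀ a : H, π (E a) ∈ Hb := by
        intro a
        obtain ⟨b, hbmem, hba⟩ := a.2
        have : b = E a := Subtype.ext hba
        rw [← this]
        exact hbmem
      set f : H → ℂˣ := fun a => fb ⟨π (E a), hEmem a⟩ * (Units.mk0 (μ (E a)) (hμne _))⁻¹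
        with hfdef
      refine ⟨f, ?_⟩
      intro a b
      have hEab : E (a * b) = E a * E b := Subtype.ext rfl
      have hsub : (⟨π (E (a * b)), hEmem _⟩ : Hb) =
          ⟨π (E a), hEmem a⟩ * ⟨π (E b), hEmem b⟩ := by
        apply Subtype.ext
        show π (E (a * b)) = π (E a) * π (E b)
        rw [hEab, map_mul]
      have hfb1 := hfb ⟨π (E a), hEmem a⟩ ⟨π (E b), hEmem b⟩
      -- value of cb on these classes
      have hcb1 : (cb (π (E a)) (π (E b)) : ℂ) = c' (E a) (E b) := by
        rw [hcbdef]
        exact hcongr _ _ _ _ (hσ _) (hσ _)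
      have hval : ((fb ⟨π (E a), hEmem a⟩ : ℂˣ) : ℂ) * ((fb ⟨π (E b), hEmem b⟩ : ℂˣ) : ℂ) *
          (((fb (⟨π (E a), hEmem a⟩ * ⟨π (E b), hEmem b⟩) : ℂˣ) : ℂ))⁻¹ = c' (E a) (E b) := by
        rw [← hcb1, hfb1]
        push_cast
        ring
      rw [Units.ext_iff]
      have hfval : ∀ u : H, ((f u : ℂˣ) : ℂ) = ((fb ⟨π (E u), hEmem u⟩ : ℂˣ) : ℂ) * (μ (E u))⁻¹ := by
        intro u
        rw [hfdef]
        push_cast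
        try rfl
      push_cast
      rw [hfval, hfval, hfval, hsub]
      have hc'ab : c' (E a) (E b) = d (a : G) (b : G) * μ (E a) * μ (E b) / μ (E a * E b) := by
        exact hc'def (E a) (E b)
      have hμab : μ (E (a * b)) = μ (E a * E b) := by rw [hEab]
      have hd_ab : ((c (a : G) (b : G) : ℂˣ) : ℂ) = d (a : G) (b : G) := (hd_def _ _).symm
      rw [hd_ab]
      have hne1 : ((fb (⟨π (E a), hEmem a⟩ * ⟨π (E b), hEmem b⟩) : ℂˣ) : ℂ) ≠ 0 := Units.ne_zero _
      rw [hc'ab] at hval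
      rw [hμab]
      field_simp [hμne, Units.ne_zero] at hval ⊢
      linear_combination -hval

/-- Let `G` be a finite `p`-group of order `≥ p^{2m}` and
`[c] ∈ H²(G, ℂ*)` any class. Then there is a subgroup `H < G` of order exactly `p^m`
on which the restriction of `[c]` is trivial (i.e. a coboundary). -/
theorem pgroup_isotropic_subgroup
    {G : Type*} [Group G] [Fintype G] (p : ℕ) [Fact p.Prime]
    (hG : IsPGroup p G) (m : ℕ) (hm : p ^ (2 * m) ≤ Fintype.card G)
    (c : G → G → ℂˣ)
    (hc : ∀ g h k : G, c g h * c (g * h) k = c h k * c g (h * k)) :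
    ∃ H : Subgroup G, Nat.card H = p ^ m ∧
      ∃ f : H → ℂˣ, ∀ a b : H, c (a : G) (b : G) = f a * f b * (f (a * b))⁻¹ :=
  pgroup_aux p m hG hm c hc
end

section
/- Let p ≥ 5 be prime, A = (𝔽_p)^5, T the nilpotent single Jordan block on A (T(x₁) = 0, T(x_i) = x_{i−1}), R = 1 + T and S = 1 + T². Then for every pair (l₁, l₂) ≠ (0,0) in (ℤ/p)², the 𝔽_p-linear operator R^{l₁} S^{l₂} − I on A has rank at least 3. -/
set_option maxHeartbeats 1000000

open Polynomial

private lemma jordan_poly1 (K : Type*) [CommRing K] (n : ℕ) :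
    ∃ H : K[X], (1 + X) ^ n = 1 + C (n : K) * X + X ^ 2 * H := by
  induction n with
  | zero => exact ⟨0, by simp⟩
  | succ n ih =>
    obtain ⟨H, hH⟩ := ih
    refine ⟨C (n : K) + H + X * H, ?_⟩
    rw [pow_succ, hH]
    rw [Nat.cast_add, Nat.cast_one, C_add, C_1]
    ring

private lemma jordan_poly2 (K : Type*) [CommRing K] (m : ℕ) :
    ∃ H : K[X], (1 + X ^ 2) ^ m = 1 + C (m : K) * X ^ 2 + X ^ 4 * H := by
  induction m with
  | zero => exact ⟨0, by simp⟩
  | succ m ih =>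
    obtain ⟨H, hH⟩ := ih
    refine ⟨C (m : K) + H + X ^ 2 * H, ?_⟩
    rw [pow_succ, hH]
    rw [Nat.cast_add, Nat.cast_one, C_add, C_1]
    ring

private lemma jordan_polyProd (K : Type*) [CommRing K] (n m : ℕ) :
    ∃ G : K[X], (1 + X) ^ n * (1 + X ^ 2) ^ m = 1 + C (n : K) * X + X ^ 2 * G := by
  obtain ⟨H₁, h₁⟩ := jordan_poly1 K n
  obtain ⟨H₂, h₂⟩ := jordan_poly2 K m
  refine ⟨C (m : K) + X ^ 2 * H₂ + C (n : K) * C (m : K) * X + C (n : K) * X ^ 3 * H₂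
    + H₁ * (1 + C (m : K) * X ^ 2 + X ^ 4 * H₂), ?_⟩
  rw [h₁, h₂]; ring

/-- Let `p ≥ 5` be prime, `A = (𝔽_p)⁵`, `T` the nilpotent single
Jordan block (`T x₁ = 0`, `T xᵢ = x_{i−1}`), `R = 1 + T`, `S = 1 + T²`. Then for
every `(l₁, l₂) ≠ (0,0)` in `(ℤ/p)²`, the operator `R^{l₁} S^{l₂} − I` has rank at
least `3`. -/
theorem jordan_block_rank_bound
    (p : ℕ) [Fact p.Prime] (hp : 5 ≤ p) :
    let T : (Fin 5 → ZMod p) →ₗ[ZMod p] (Fin 5 → ZMod p) :=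
      Matrix.toLin' (Matrix.of fun i j : Fin 5 => if (j : ℕ) = (i : ℕ) + 1 then 1 else 0)
    let R := 1 + T
    let S := 1 + T ^ 2
    ∀ l₁ l₂ : ZMod p, (l₁, l₂) ≠ (0, 0) →
      3 ≤ Module.finrank (ZMod p)
        (LinearMap.range (R ^ l₁.val * S ^ l₂.val - 1)) := by
  intro T R S l₁ l₂ hl
  haveI : NeZero p := ⟨(Fact.out : p.Prime).ne_zero⟩
  have hR : R = 1 + T := rfl
  have hS : S = 1 + T ^ 2 := rfl
  -- T ^ 5 = 0
  have hT5 : T ^ 5 = 0 := by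
    set N : Matrix (Fin 5) (Fin 5) (ZMod p) :=
      Matrix.of fun i j : Fin 5 => if (j : ℕ) = (i : ℕ) + 1 then 1 else 0 with hN
    have h5 : N ^ 5 = 0 := by
      ext i j
      fin_cases i <;> fin_cases j <;>
        · simp (config := { decide := true }) only [hN, pow_succ, pow_zero, one_mul,
            Matrix.mul_apply, Fin.sum_univ_five, Matrix.of_apply, Matrix.zero_apply]
          norm_num
    have : T ^ 5 = Matrix.toLin' (N ^ 5) := by
      simp [T, pow_succ, Matrix.toLin'_mul, Module.End.mul_eq_comp]
      rfl
    rw [this, h5]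
    simp
  -- action of T on basis vectors
  have hT1 : T (Pi.single (1 : Fin 5) 1) = Pi.single (0 : Fin 5) 1 := by
    ext i
    fin_cases i <;>
      · simp (config := { decide := true }) only [T, Matrix.toLin'_apply, Matrix.mulVec,
          dotProduct, Fin.sum_univ_five, Matrix.of_apply, Pi.single_apply]
        norm_num
  have hT2 : T (Pi.single (2 : Fin 5) 1) = Pi.single (1 : Fin 5) 1 := by
    ext i
    fin_cases i <;>
      · simp (config := { decide := true }) only [T, Matrix.toLin'_apply, Matrix.mulVec,
          dotProduct, Fin.sum_univ_five, Matrix.of_apply, Pi.single_apply]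
        norm_num
  have hT3 : T (Pi.single (3 : Fin 5) 1) = Pi.single (2 : Fin 5) 1 := by
    ext i
    fin_cases i <;>
      · simp (config := { decide := true }) only [T, Matrix.toLin'_apply, Matrix.mulVec,
          dotProduct, Fin.sum_univ_five, Matrix.of_apply, Pi.single_apply]
        norm_num
  have hT4 : T (Pi.single (4 : Fin 5) 1) = Pi.single (3 : Fin 5) 1 := by
    ext i
    fin_cases i <;>
      · simp (config := { decide := true }) only [T, Matrix.toLin'_apply, Matrix.mulVec,
          dotProduct, Fin.sum_univ_five, Matrix.of_apply, Pi.single_apply]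
        norm_num
  have h35 : (3 : ℕ) ≤ 5 := by norm_num
  -- linear independence of the first three basis vectors
  have hLI : LinearIndependent (ZMod p)
      (fun i : Fin 3 => (Pi.single (Fin.castLE h35 i) 1 : Fin 5 → ZMod p)) := by
    have h := (Pi.basisFun (ZMod p) (Fin 5)).linearIndependent.comp
      (Fin.castLE h35) (Fin.castLE_injective h35)
    simpa [Function.comp_def, Pi.basisFun_apply] using h
  -- generic lower bound on finrank
  have key : ∀ W : Submodule (ZMod p) (Fin 5 → ZMod p),
      (∀ i : Fin 3, (Pi.single (Fin.castLE h35 i) 1 : Fin 5 → ZMod p) ∈ W) →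
      3 ≤ Module.finrank (ZMod p) W := by
    intro W hW
    have hle : Submodule.span (ZMod p)
        (Set.range fun i : Fin 3 => (Pi.single (Fin.castLE h35 i) 1 : Fin 5 → ZMod p)) ≤ W :=
      Submodule.span_le.mpr (by rintro x ⟨i, rfl⟩; exact hW i)
    have h1 : Module.finrank (ZMod p) (Submodule.span (ZMod p)
        (Set.range fun i : Fin 3 => (Pi.single (Fin.castLE h35 i) 1 : Fin 5 → ZMod p))) = 3 := by
      rw [finrank_span_eq_card hLI]
      simp
    rw [← h1]
    exact Submodule.finrank_mono hle
  -- surjectivity helper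
  have surj_of_isUnit : ∀ u : Module.End (ZMod p) (Fin 5 → ZMod p), IsUnit u →
      LinearMap.range u = ⊤ := by
    intro u hu
    rw [LinearMap.range_eq_top]
    intro y
    refine ⟨(↑hu.unit⁻¹ : Module.End (ZMod p) (Fin 5 → ZMod p)) y, ?_⟩
    have hinv : u * (↑hu.unit⁻¹ : Module.End (ZMod p) (Fin 5 → ZMod p)) = 1 := by
      nth_rewrite 1 [← hu.unit_spec]
      exact_mod_cast hu.unit.mul_inv
    rw [← Module.End.mul_apply, hinv, Module.End.one_apply]
  have hvcast : ∀ a : ZMod p, ((a.val : ℕ) : ZMod p) = a := fun a =>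
    ZMod.natCast_rightInverse a
  rcases eq_or_ne l₁ 0 with h1 | h1
  · -- l₁ = 0, so l₂ ≠ 0, the operator is T² times a unit
    have h2 : l₂ ≠ 0 := by
      intro h2
      exact hl (by rw [h1, h2])
    have hval1 : l₁.val = 0 := by rw [h1, ZMod.val_zero]
    obtain ⟨H, hH⟩ := jordan_poly2 (ZMod p) l₂.val
    have hfac : (1 + X ^ 2 : (ZMod p)[X]) ^ l₂.val - 1 = X ^ 2 * (C l₂ + X ^ 2 * H) := by
      rw [hH, hvcast l₂]; ring
    have hf : R ^ l₁.val * S ^ l₂.val - 1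
        = T ^ 2 * (aeval T (C l₂ + X ^ 2 * H)) := by
      rw [hval1, pow_zero, one_mul, hS]
      have : ((1 : Module.End (ZMod p) (Fin 5 → ZMod p)) + T ^ 2) ^ l₂.val - 1
          = aeval T ((1 + X ^ 2 : (ZMod p)[X]) ^ l₂.val - 1) := by
        simp [map_sub, map_pow, map_add, map_one, aeval_X]
      rw [this, hfac, map_mul, map_pow, aeval_X]
    have hnil : IsNilpotent (T ^ 2 * aeval T H) := by
      refine ⟨5, ?_⟩
      have : (T ^ 2 * aeval T H) ^ 5 = aeval T ((X ^ 2 * H) ^ 5) := by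
        simp [map_mul, map_pow, aeval_X]
      rw [this, show ((X ^ 2 * H : (ZMod p)[X]) ^ 5) = X ^ 5 * (X ^ 5 * H ^ 5) by ring,
        map_mul, map_pow, aeval_X, hT5, zero_mul]
    have hu : IsUnit (aeval T (C l₂ + X ^ 2 * H)) := by
      rw [map_add, aeval_C, map_mul, map_pow, aeval_X]
      exact IsNilpotent.isUnit_add_left_of_commute hnil
        ((isUnit_iff_ne_zero.mpr h2).map (algebraMap (ZMod p) _))
        ((Algebra.commutes l₂ _).symm)
    have hrange : LinearMap.range (R ^ l₁.val * S ^ l₂.val - 1)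
        = LinearMap.range (T ^ 2) := by
      rw [hf, Module.End.mul_eq_comp, LinearMap.range_comp, surj_of_isUnit _ hu,
        Submodule.map_top]
    rw [hrange]
    apply key
    intro i
    fin_cases i
    · exact ⟨Pi.single (2 : Fin 5) 1,
        by rw [pow_two, Module.End.mul_apply, hT2, hT1]; congr 1⟩
    · exact ⟨Pi.single (3 : Fin 5) 1,
        by rw [pow_two, Module.End.mul_apply, hT3, hT2]; congr 1⟩
    · exact ⟨Pi.single (4 : Fin 5) 1,
        by rw [pow_two, Module.End.mul_apply, hT4, hT3]; congr 1⟩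
  · -- l₁ ≠ 0, the operator is T times a unit
    obtain ⟨G, hG⟩ := jordan_polyProd (ZMod p) l₁.val l₂.val
    have hfac : (1 + X : (ZMod p)[X]) ^ l₁.val * (1 + X ^ 2) ^ l₂.val - 1
        = X * (C l₁ + X * G) := by
      rw [hG, hvcast l₁]; ring
    have hf : R ^ l₁.val * S ^ l₂.val - 1 = T * (aeval T (C l₁ + X * G)) := by
      rw [hR, hS]
      have : ((1 : Module.End (ZMod p) (Fin 5 → ZMod p)) + T) ^ l₁.val
            * (1 + T ^ 2) ^ l₂.val - 1
          = aeval T ((1 + X : (ZMod p)[X]) ^ l₁.val * (1 + X ^ 2) ^ l₂.val - 1) := by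
        simp [map_sub, map_mul, map_pow, map_add, map_one, aeval_X]
      rw [this, hfac, map_mul, aeval_X]
    have hnil : IsNilpotent (T * aeval T G) := by
      refine ⟨5, ?_⟩
      have : (T * aeval T G) ^ 5 = aeval T ((X * G) ^ 5) := by
        simp [map_mul, map_pow, aeval_X]
      rw [this, show ((X * G : (ZMod p)[X]) ^ 5) = X ^ 5 * G ^ 5 by ring,
        map_mul, map_pow, aeval_X, hT5, zero_mul]
    have hu : IsUnit (aeval T (C l₁ + X * G)) := by
      rw [map_add, aeval_C, map_mul, aeval_X]
      exact IsNilpotent.isUnit_add_left_of_commute hnil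
        ((isUnit_iff_ne_zero.mpr h1).map (algebraMap (ZMod p) _))
        ((Algebra.commutes l₁ _).symm)
    have hrange : LinearMap.range (R ^ l₁.val * S ^ l₂.val - 1)
        = LinearMap.range T := by
      rw [hf, Module.End.mul_eq_comp, LinearMap.range_comp, surj_of_isUnit _ hu,
        Submodule.map_top]
    rw [hrange]
    apply key
    intro i
    fin_cases i
    · exact ⟨Pi.single (1 : Fin 5) 1, by rw [hT1]; congr 1⟩
    · exact ⟨Pi.single (2 : Fin 5) 1, by rw [hT2]; congr 1⟩
    · exact ⟨Pi.single (3 : Fin 5) 1, by rw [hT3]; congr 1⟩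
end
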